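/- Fix n ≥ 1 and let Θ : Γ(E) → Γ(E_*) be a contractive multi-analytic operator, Δ_Θ := (I − Θ*Θ)^{1/2}, and let C = [C_1, …, C_n] be the row isometry on cl ran Δ_Θ determined by C_j(Δ_Θ f) = Δ_Θ(L_j^E f). Then ∑_{j=1}^{n} C_j C_j* = I on cl ran Δ_Θ (i.e. C is a Cuntz row isometry) if and only if cl(Δ_Θ(Γ(E))) = cl(Δ_Θ(Γ(E) ⊖ E)), where Γ(E) ⊖ E denotes the subspace of f ∈ Γ(E) whose component at the empty word vanishes. -/

import Mathlib

set_option linter.unusedSectionVars false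

noncomputable section
open ContinuousLinearMap
open scoped ENNReal NNReal ComplexInnerProductSpace
section Defect
variable {H K : Type*} [NormedAddCommGroup H] [InnerProductSpace ℂ H] [CompleteSpace H]
  [NormedAddCommGroup K] [InnerProductSpace ℂ K] [CompleteSpace K]

/-- The defect operator `Δ_A := (I - A*A)^{1/2}` of a contraction `A : H → K`. -/
noncomputable def defect (A : H →L[ℂ] K) : H →L[ℂ] H :=
  CFC.sqrt (1 - (ContinuousLinearMap.adjoint A).comp A)

/-- Closure of the range of an operator, as a submodule. -/
noncomputable def clRan (A : H →L[ℂ] K) : Submodule ℂ K :=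
  (LinearMap.range (A : H →ₗ[ℂ] K)).topologicalClosure

theorem defect_mem_clRan (A : H →L[ℂ] K) (x : H) : defect A x ∈ clRan (defect A) :=
  Submodule.le_topologicalClosure _ (LinearMap.mem_range_self (defect A : H →ₗ[ℂ] H) x)

instance clRan_completeSpace (A : H →L[ℂ] K) : CompleteSpace (clRan A) :=
  (Submodule.isClosed_topologicalClosure _).isComplete.completeSpace_coe
end Defect

section FockDef
/-- Words in the generators `{1, …, n}`: the free monoid on `Fin n`. -/
abbrev Word (n : ℕ) := List (Fin n)

/-- The full Fock space over `ℂⁿ` with coefficients in `E`, realized as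
`ℓ²(F_n^+, E)`, the Hilbert space of square-summable `E`-valued families indexed by words. -/
abbrev Fock (n : ℕ) (E : Type*) [NormedAddCommGroup E] [InnerProductSpace ℂ E] : Type _ :=
  lp (fun _ : Word n => E) 2

variable {n : ℕ} {E : Type*} [NormedAddCommGroup E] [InnerProductSpace ℂ E]

/-- The underlying function of `L_i f`: `(L_i f)(α) = f(β)` if `α = iβ`, else `0`. -/
def shiftFun (i : Fin n) (f : Word n → E) : Word n → E
  | [] => 0
  | a :: β => if a = i then f β else 0

theorem shiftFun_cons (i : Fin n) (f : Word n → E) (β : Word n) :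
    shiftFun i f (i :: β) = f β := by simp [shiftFun]

theorem shiftFun_eq_zero {i : Fin n} {f : Word n → E} {α : Word n}
    (hα : α ∉ Set.range (fun β : Word n => (i :: β : Word n))) : shiftFun i f α = 0 := by
  match α with
  | [] => rfl
  | a :: β =>
    have : ¬ (a = i) := by rintro rfl; exact hα ⟨β, rfl⟩
    simp [shiftFun, this]

theorem cons_injective (i : Fin n) :
    Function.Injective (fun β : Word n => (i :: β : Word n)) := fun a b h => by
  simpa using h

theorem shiftFun_memℓp (i : Fin n) (f : Fock n E) : Memℓp (shiftFun i ⇑f) 2 := by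
  refine memℓp_gen ?_
  have h0 : ∀ α ∉ Set.range (fun β : Word n => (i :: β : Word n)),
      ‖shiftFun i (⇑f) α‖ ^ (2 : ℝ≥0∞).toReal = 0 := by
    intro α hα
    rw [shiftFun_eq_zero hα]
    simp [Real.zero_rpow]
  refine ((cons_injective i).summable_iff h0).mp ?_
  have h1 : (fun α => ‖shiftFun i (⇑f) α‖ ^ (2 : ℝ≥0∞).toReal) ∘
      (fun β : Word n => (i :: β : Word n)) = fun β => ‖f β‖ ^ (2 : ℝ≥0∞).toReal := by
    funext β
    simp [Function.comp, shiftFun_cons]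
  rw [h1]
  exact (lp.memℓp f).summable (by norm_num)

theorem shiftFun_norm (i : Fin n) (f : Fock n E) :
    ‖(⟨shiftFun i ⇑f, shiftFun_memℓp i f⟩ : Fock n E)‖ = ‖f‖ := by
  have hp : 0 < (2 : ℝ≥0∞).toReal := by norm_num
  refine Real.rpow_left_injOn (by norm_num : (2 : ℝ≥0∞).toReal ≠ 0)
    (norm_nonneg _) (norm_nonneg _) ?_
  simp only []
  rw [lp.norm_rpow_eq_tsum hp, lp.norm_rpow_eq_tsum hp]
  have h0 : (Function.support fun α => ‖shiftFun i (⇑f) α‖ ^ (2 : ℝ≥0∞).toReal) ⊆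
      Set.range (fun β : Word n => (i :: β : Word n)) := by
    intro α hα
    simp only [Function.mem_support] at hα
    by_contra hr
    exact hα (by rw [shiftFun_eq_zero hr]; simp [Real.zero_rpow])
  rw [← (cons_injective i).tsum_eq h0]
  congr 1
  funext β
  simp [shiftFun_cons]

/-- The left creation operator `L_i` on the Fock space, as a linear map. -/
noncomputable def creationL (i : Fin n) : Fock n E →ₗ[ℂ] Fock n E where
  toFun f := ⟨shiftFun i ⇑f, shiftFun_memℓp i f⟩
  map_add' f g := by
    apply lp.ext
    funext α
    match α with
    | [] =>
      show _ = shiftFun i f [] + shiftFun i g []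
      simp [shiftFun, lp.coeFn_add]
    | a :: β =>
      show _ = shiftFun i f (a :: β) + shiftFun i g (a :: β)
      by_cases h : a = i <;> simp [shiftFun, h, lp.coeFn_add]
  map_smul' c f := by
    apply lp.ext
    funext α
    match α with
    | [] => simp [shiftFun, lp.coeFn_smul]
    | a :: β =>
      by_cases h : a = i <;> simp [shiftFun, h, lp.coeFn_smul]

/-- The left creation operator `L_i = L_i^E ∈ B(Γ(E))`, defined by
`(L_i f)(α) = f(β)` if `α = iβ` for some word `β`, and `(L_i f)(α) = 0` otherwise. -/
noncomputable def creation (i : Fin n) : Fock n E →L[ℂ] Fock n E :=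
  (creationL i).mkContinuous 1 (fun f => by
    rw [one_mul]
    exact le_of_eq (shiftFun_norm i f))


/-- The `E`-valued family supported at the empty word with value `v`. -/
def constFun (n : ℕ) (v : E) : Word n → E := fun α => if α = [] then v else 0

theorem constFun_memℓp (v : E) : Memℓp (constFun n v) 2 := by
  refine (memℓp_zero ?_).of_exponent_ge zero_le
  refine (Set.finite_singleton ([] : Word n)).subset ?_
  intro α hα
  simp only [Set.mem_setOf_eq, constFun] at hα
  by_contra h
  simp only [Set.mem_singleton_iff] at h
  exact hα (if_neg h)

/-- The canonical embedding of `E` into `Γ(E)` (families supported at the empty word). -/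
def fockConst (n : ℕ) (v : E) : Fock n E := ⟨constFun n v, constFun_memℓp v⟩

theorem fockConst_norm_le (f : Fock n E) :
    ‖(⟨constFun n (f []), constFun_memℓp _⟩ : Fock n E)‖ ≤ ‖f‖ := by
  have hp : 0 < (2 : ℝ≥0∞).toReal := by norm_num
  rw [← Real.rpow_le_rpow_iff (norm_nonneg _) (norm_nonneg _) hp]
  rw [lp.norm_rpow_eq_tsum hp]
  have h1 : (∑' α : Word n, ‖constFun n (f []) α‖ ^ (2 : ℝ≥0∞).toReal) =
      ‖f []‖ ^ (2 : ℝ≥0∞).toReal := by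
    refine tsum_eq_single ([] : Word n) ?_
    intro b' hb'
    simp [constFun, if_neg hb', Real.zero_rpow hp.ne']
  rw [h1]
  exact Real.rpow_le_rpow (norm_nonneg _) (lp.norm_apply_le_norm two_ne_zero f []) hp.le

/-- `P_∅`, the orthogonal projection of `Γ(E)` onto the subspace of families supported
at the empty word, as a linear map. -/
noncomputable def projEmptyL : Fock n E →ₗ[ℂ] Fock n E where
  toFun f := ⟨constFun n (f []), constFun_memℓp _⟩
  map_add' f g := by
    apply lp.ext; funext α
    show _ = constFun n (f []) α + constFun n (g []) α
    by_cases h : α = [] <;> simp [constFun, h, lp.coeFn_add]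
  map_smul' c f := by
    apply lp.ext; funext α
    by_cases h : α = [] <;> simp [constFun, h, lp.coeFn_smul]

/-- `P_∅ = P_∅^E`, the orthogonal projection of `Γ(E)` onto the subspace of families
supported at the empty word (identified with `E`). -/
noncomputable def projEmpty : Fock n E →L[ℂ] Fock n E :=
  projEmptyL.mkContinuous 1 (fun f => by rw [one_mul]; exact fockConst_norm_le f)

end FockDef

section AuxHilb
open scoped InnerProductSpace
variable {H K : Type*} [NormedAddCommGroup H] [InnerProductSpace ℂ H] [CompleteSpace H]
  [NormedAddCommGroup K] [InnerProductSpace ℂ K] [CompleteSpace K]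

theorem one_sub_adjoint_comp_nonneg (A : H →L[ℂ] K) (hA : ‖A‖ ≤ 1) :
    (0 : H →L[ℂ] H) ≤ 1 - (ContinuousLinearMap.adjoint A).comp A := by
  rw [ContinuousLinearMap.nonneg_iff_isPositive]
  constructor
  · rw [← ContinuousLinearMap.isSelfAdjoint_iff_isSymmetric]
    rw [IsSelfAdjoint, star_sub, star_one, ContinuousLinearMap.star_eq_adjoint,
      ContinuousLinearMap.adjoint_comp, ContinuousLinearMap.adjoint_adjoint]
  · intro x
    have h1 : ((ContinuousLinearMap.adjoint A).comp A).reApplyInnerSelf x = ‖A x‖ ^ 2 := by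
      rw [ContinuousLinearMap.reApplyInnerSelf_apply, ContinuousLinearMap.comp_apply,
        ContinuousLinearMap.adjoint_inner_left, inner_self_eq_norm_sq]
    have h2 : ‖A x‖ ≤ ‖x‖ := by
      calc ‖A x‖ ≤ ‖A‖ * ‖x‖ := A.le_opNorm x
        _ ≤ 1 * ‖x‖ := by gcongr
        _ = ‖x‖ := one_mul _
    have h3 : (1 - (ContinuousLinearMap.adjoint A).comp A).reApplyInnerSelf x
        = ‖x‖ ^ 2 - ‖A x‖ ^ 2 := by
      rw [ContinuousLinearMap.reApplyInnerSelf_apply, ContinuousLinearMap.sub_apply,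
        ContinuousLinearMap.one_apply, inner_sub_left, map_sub, inner_self_eq_norm_sq,
        ← ContinuousLinearMap.reApplyInnerSelf_apply, h1]
    rw [h3]
    have := norm_nonneg (A x)
    nlinarith

set_option synthInstance.maxHeartbeats 1000000 in
theorem defect_nonneg (A : H →L[ℂ] K) : (0 : H →L[ℂ] H) ≤ defect A :=
  CFC.sqrt_nonneg _

theorem defect_isSelfAdjoint (A : H →L[ℂ] K) : IsSelfAdjoint (defect A) :=
  (defect_nonneg A).isSelfAdjoint

theorem defect_comp_self (A : H →L[ℂ] K) (hA : ‖A‖ ≤ 1) :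
    (defect A).comp (defect A) = 1 - (ContinuousLinearMap.adjoint A).comp A := by
  have h := CFC.sq_sqrt (1 - (ContinuousLinearMap.adjoint A).comp A)
    (one_sub_adjoint_comp_nonneg A hA)
  rw [sq, ContinuousLinearMap.mul_def] at h
  exact h

theorem inner_defect (A : H →L[ℂ] K) (hA : ‖A‖ ≤ 1) (x y : H) :
    ⟪defect A x, defect A y⟫_ℂ = ⟪x, y⟫_ℂ - ⟪A x, A y⟫_ℂ := by
  have h1 : ⟪defect A x, defect A y⟫_ℂ = ⟪x, defect A (defect A y)⟫_ℂ := by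
    have h := ContinuousLinearMap.adjoint_inner_right (defect A) x (defect A y)
    rw [← h, (defect_isSelfAdjoint A).adjoint_eq]
  have h2 : defect A (defect A y) = y - (ContinuousLinearMap.adjoint A) (A y) := by
    have := congrArg (fun T => T y) (defect_comp_self A hA)
    simpa using this
  rw [h1, h2, inner_sub_right, ContinuousLinearMap.adjoint_inner_right]

theorem dense_defectRange (A : H →L[ℂ] K) :
    Dense {x : clRan A | (x : K) ∈ Set.range A} := by
  intro x
  rw [closure_subtype]
  have himg : (Subtype.val '' {x : clRan A | (x : K) ∈ Set.range A}) = Set.range A := by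
    ext y
    constructor
    · rintro ⟨z, hz, rfl⟩; exact hz
    · rintro ⟨w, rfl⟩
      exact ⟨⟨A w, Submodule.le_topologicalClosure _ (LinearMap.mem_range_self (A : H →ₗ[ℂ] K) w)⟩,
        ⟨w, rfl⟩, rfl⟩
  rw [himg]
  have hx : (x : K) ∈ ((LinearMap.range (A : H →ₗ[ℂ] K)).topologicalClosure : Set K) := x.2
  rwa [Submodule.topologicalClosure_coe, LinearMap.coe_range, ContinuousLinearMap.coe_coe] at hx

theorem dense_defect_image (A : H →L[ℂ] K) {s : Set H}
    (hs : closure (Set.range A) = closure (A '' s)) :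
    Dense {x : clRan A | (x : K) ∈ A '' s} := by
  intro x
  rw [closure_subtype]
  have himg : (Subtype.val '' {x : clRan A | (x : K) ∈ A '' s}) = A '' s := by
    ext y
    constructor
    · rintro ⟨z, hz, rfl⟩; exact hz
    · rintro ⟨w, hw, rfl⟩
      exact ⟨⟨A w, Submodule.le_topologicalClosure _ (LinearMap.mem_range_self (A : H →ₗ[ℂ] K) w)⟩,
        ⟨w, hw, rfl⟩, rfl⟩
  rw [himg, ← hs]
  have hx : (x : K) ∈ ((LinearMap.range (A : H →ₗ[ℂ] K)).topologicalClosure : Set K) := x.2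
  rwa [Submodule.topologicalClosure_coe, LinearMap.coe_range, ContinuousLinearMap.coe_coe] at hx

end AuxHilb

section AuxFock
open scoped InnerProductSpace
variable {n : ℕ} {E : Type*} [NormedAddCommGroup E] [InnerProductSpace ℂ E]

theorem creation_coe (i : Fin n) (f : Fock n E) :
    ⇑(creation i f) = shiftFun i ⇑f := rfl

/-- The left annihilation function: `(coShiftFun i f)(β) = f(iβ)`. -/
def coShiftFun (i : Fin n) (f : Word n → E) : Word n → E := fun β => f (i :: β)

theorem coShiftFun_memℓp (i : Fin n) (f : Fock n E) : Memℓp (coShiftFun i ⇑f) 2 := by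
  refine memℓp_gen ?_
  exact ((lp.memℓp f).summable (by norm_num)).comp_injective (cons_injective i)

/-- The left annihilation operator `L_i^*` (as a bare function on `Fock`). -/
def coShift (i : Fin n) (f : Fock n E) : Fock n E := ⟨coShiftFun i ⇑f, coShiftFun_memℓp i f⟩

theorem sum_creation_coShift {f : Fock n E} (hf : f [] = 0) :
    ∑ j : Fin n, creation j (coShift j f) = f := by
  apply lp.ext
  rw [lp.coeFn_sum]
  funext α
  rw [Finset.sum_apply]
  match α with
  | [] =>
    have : ∀ j : Fin n, (creation j (coShift j f)) ([] : Word n) = 0 := fun j => rfl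
    simp only [this, Finset.sum_const_zero]
    exact hf.symm
  | a :: β =>
    have h1 : ∀ j : Fin n, (creation j (coShift j f)) (a :: β)
        = if a = j then f (j :: β) else 0 := by
      intro j
      rw [creation_coe]
      by_cases h : a = j
      · subst h; rw [if_pos rfl, shiftFun_cons]; rfl
      · rw [if_neg h]; simp [shiftFun, h]
    simp only [h1]
    rw [Finset.sum_ite_eq]
    simp

theorem inner_creation (j k : Fin n) (f g : Fock n E) :
    ⟪creation j f, creation k g⟫_ℂ = if j = k then ⟪f, g⟫_ℂ else 0 := by
  rw [lp.inner_eq_tsum]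
  by_cases h : j = k
  · subst h
    rw [if_pos rfl, lp.inner_eq_tsum]
    have h0 : (Function.support fun α => ⟪(creation j f) α, (creation j g) α⟫_ℂ) ⊆
        Set.range (fun β : Word n => (j :: β : Word n)) := by
      intro α hα
      simp only [Function.mem_support] at hα
      by_contra hr
      exact hα (by rw [creation_coe, shiftFun_eq_zero hr, inner_zero_left])
    rw [← (cons_injective j).tsum_eq h0]
    congr 1
    funext β
    simp only [creation_coe, shiftFun_cons]
  · rw [if_neg h]
    have h0 : ∀ α : Word n, ⟪(creation j f) α, (creation k g) α⟫_ℂ = 0 := by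
      intro α
      match α with
      | [] => rw [creation_coe]; show ⟪(0 : E), _⟫_ℂ = 0; exact inner_zero_left _
      | a :: β =>
        by_cases haj : a = j
        · subst haj
          have : (creation k g) (a :: β) = 0 := by
            rw [creation_coe]; simp [shiftFun, h]
          rw [this, inner_zero_right]
        · have : (creation j f) (a :: β) = 0 := by
            rw [creation_coe]; simp [shiftFun, haj]
          rw [this, inner_zero_left]
    simp only [h0, tsum_zero]

/-- The subspace `Γ(E) ⊖ E` of families vanishing at the empty word. -/
def emptyKer (n : ℕ) (E : Type*) [NormedAddCommGroup E] [InnerProductSpace ℂ E] :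
    Submodule ℂ (Fock n E) where
  carrier := {f : Fock n E | f [] = 0}
  zero_mem' := by show (0 : Fock n E) [] = 0; rw [lp.coeFn_zero]; rfl
  add_mem' := by
    intro a b ha hb
    have ha' : a [] = 0 := ha
    have hb' : b [] = 0 := hb
    show (a + b : Fock n E) [] = 0
    rw [lp.coeFn_add, Pi.add_apply, ha', hb', add_zero]
  smul_mem' := by
    intro c a ha
    have ha' : a [] = 0 := ha
    show (c • a : Fock n E) [] = 0
    rw [lp.coeFn_smul, Pi.smul_apply, ha', smul_zero]

end AuxFock

open scoped InnerProductSpace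

set_option maxHeartbeats 1000000 in
/-- For contractive multi-analytic `Θ : Γ(E) → Γ(E_*)` and the row isometry
`C = [C_1, …, C_n]` on `cl ran Δ_Θ` determined by `C_j(Δ_Θ f) = Δ_Θ(L_j f)`:
`∑ⱼ C_j C_j* = I` iff `cl(Δ_Θ(Γ(E))) = cl(Δ_Θ(Γ(E) ⊖ E))`. -/
theorem cuntz_iff_szego {n : ℕ} (hn : 1 ≤ n) {E Estar : Type*}
    [NormedAddCommGroup E] [InnerProductSpace ℂ E] [CompleteSpace E]
    [NormedAddCommGroup Estar] [InnerProductSpace ℂ Estar] [CompleteSpace Estar]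
    (Θ : Fock n E →L[ℂ] Fock n Estar) (hΘc : ‖Θ‖ ≤ 1)
    (hΘ : ∀ i : Fin n, Θ.comp (creation i) = (creation i).comp Θ)
    (C : Fin n → (clRan (defect Θ) →L[ℂ] clRan (defect Θ)))
    (hC : ∀ (j : Fin n) (f : Fock n E), C j ⟨defect Θ f, defect_mem_clRan _ _⟩ =
      ⟨defect Θ (creation j f), defect_mem_clRan _ _⟩) :
    (∑ j : Fin n, (C j).comp (ContinuousLinearMap.adjoint (C j)) = 1) ↔
      closure (Set.range (defect Θ)) =
        closure (defect Θ '' {f : Fock n E | f [] = 0}) := by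
  classical
  have hΔinner : ∀ f g : Fock n E, ⟪defect Θ f, defect Θ g⟫_ℂ = ⟪f, g⟫_ℂ - ⟪Θ f, Θ g⟫_ℂ :=
    inner_defect Θ hΘc
  have hΘL : ∀ (i : Fin n) (f : Fock n E), Θ (creation i f) = creation i (Θ f) := by
    intro i f
    have h := congrArg (fun T => T f) (hΘ i)
    simpa using h
  -- inner products of row entries on the generating set
  have hCinner0 : ∀ (j k : Fin n) (f g : Fock n E),
      (⟪C j ⟨defect Θ f, defect_mem_clRan _ _⟩, C k ⟨defect Θ g, defect_mem_clRan _ _⟩⟫_ℂ : ℂ)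
        = if j = k then ⟪(⟨defect Θ f, defect_mem_clRan _ _⟩ : clRan (defect Θ)),
            (⟨defect Θ g, defect_mem_clRan _ _⟩ : clRan (defect Θ))⟫_ℂ else 0 := by
    intro j k f g
    rw [hC, hC]
    simp only [Submodule.coe_inner]
    rw [hΔinner, hΘL, hΘL, inner_creation, inner_creation, hΔinner]
    split_ifs with h
    · rfl
    · rw [sub_zero]
  -- inner products of row entries everywhere, by density
  have hCinner : ∀ (j k : Fin n) (x y : clRan (defect Θ)),
      (⟪C j x, C k y⟫_ℂ : ℂ) = if j = k then ⟪x, y⟫_ℂ else 0 := by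
    intro j k
    have hd : Dense ({x : clRan (defect Θ) | (x : Fock n E) ∈ Set.range (defect Θ)} ×ˢ
        {x : clRan (defect Θ) | (x : Fock n E) ∈ Set.range (defect Θ)}) :=
      (dense_defectRange (defect Θ)).prod (dense_defectRange (defect Θ))
    have hfun : (fun p : clRan (defect Θ) × clRan (defect Θ) => (⟪C j p.1, C k p.2⟫_ℂ : ℂ))
        = fun p => if j = k then ⟪p.1, p.2⟫_ℂ else 0 := by
      refine Continuous.ext_on hd ?_ ?_ ?_
      · exact continuous_inner.comp (((C j).continuous.comp continuous_fst).prodMk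
          ((C k).continuous.comp continuous_snd))
      · by_cases h : j = k
        · simp only [if_pos h]; exact continuous_inner
        · simp only [if_neg h]; exact continuous_const
      · rintro ⟨x, y⟩ ⟨⟨f, hf⟩, ⟨g, hg⟩⟩
        have hx : (⟨defect Θ f, defect_mem_clRan _ _⟩ : clRan (defect Θ)) = x := Subtype.ext hf
        have hy : (⟨defect Θ g, defect_mem_clRan _ _⟩ : clRan (defect Θ)) = y := Subtype.ext hg
        simp only [← hx, ← hy]
        exact hCinner0 j k f g
    intro x y
    exact congrFun hfun (x, y)
  -- C_j* C_k = δ_{jk}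
  have hCcomp : ∀ j k : Fin n, (ContinuousLinearMap.adjoint (C j)).comp (C k)
      = if j = k then 1 else 0 := by
    intro j k
    refine ContinuousLinearMap.ext fun x => ?_
    refine ext_inner_left ℂ fun v => ?_
    rw [ContinuousLinearMap.comp_apply, ContinuousLinearMap.adjoint_inner_right, hCinner]
    split_ifs with h
    · simp
    · simp
  have hQC : ∀ (k : Fin n) (y : clRan (defect Θ)),
      (∑ j : Fin n, (C j).comp (ContinuousLinearMap.adjoint (C j))) (C k y) = C k y := by
    intro k y
    rw [ContinuousLinearMap.sum_apply]
    have h1 : ∀ j : Fin n, ((C j).comp (ContinuousLinearMap.adjoint (C j))) (C k y)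
        = if j = k then C k y else 0 := by
      intro j
      have h : (ContinuousLinearMap.adjoint (C j)) ((C k) y)
          = (if j = k then (1 : clRan (defect Θ) →L[ℂ] clRan (defect Θ)) else 0) y :=
        congrArg (fun T => T y) (hCcomp j k)
      rw [ContinuousLinearMap.comp_apply, h]
      split_ifs with hjk
      · subst hjk; simp
      · simp
    simp only [h1]
    simp
  constructor
  · -- Cuntz ⇒ Szegő
    intro hQ1
    apply Set.Subset.antisymm
    · refine closure_minimal ?_ isClosed_closure
      rintro _ ⟨f, rfl⟩
      have hM : ((Submodule.map (defect Θ : Fock n E →ₗ[ℂ] Fock n E) (emptyKer n E)).topologicalClosure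
          : Set (Fock n E)) = closure (defect Θ '' {f : Fock n E | f [] = 0}) := by
        rw [Submodule.topologicalClosure_coe, Submodule.map_coe]; rfl
      rw [← hM]
      have hmem : ∀ (j : Fin n) (z : clRan (defect Θ)),
          ((C j z : clRan (defect Θ)) : Fock n E)
            ∈ (Submodule.map (defect Θ : Fock n E →ₗ[ℂ] Fock n E) (emptyKer n E)).topologicalClosure := by
        intro j
        have hcl : IsClosed {z : clRan (defect Θ) | ((C j z : clRan (defect Θ)) : Fock n E)
            ∈ (Submodule.map (defect Θ : Fock n E →ₗ[ℂ] Fock n E) (emptyKer n E)).topologicalClosure} := by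
          have h2 : IsClosed ((Submodule.map (defect Θ : Fock n E →ₗ[ℂ] Fock n E) (emptyKer n E)).topologicalClosure
              : Set (Fock n E)) := Submodule.isClosed_topologicalClosure _
          exact h2.preimage (continuous_subtype_val.comp (C j).continuous)
        have hsub : {z : clRan (defect Θ) | (z : Fock n E) ∈ Set.range (defect Θ)}
            ⊆ {z : clRan (defect Θ) | ((C j z : clRan (defect Θ)) : Fock n E)
              ∈ (Submodule.map (defect Θ : Fock n E →ₗ[ℂ] Fock n E) (emptyKer n E)).topologicalClosure} := by
          rintro z ⟨g, hg⟩
          have hz : (⟨defect Θ g, defect_mem_clRan _ _⟩ : clRan (defect Θ)) = z :=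
            Subtype.ext hg
          rw [Set.mem_setOf_eq, ← hz, hC]
          exact Submodule.le_topologicalClosure _
            (Submodule.mem_map.mpr ⟨creation j g, rfl, rfl⟩)
        intro z
        exact hcl.closure_subset_iff.2 hsub ((dense_defectRange (defect Θ)) z)
      have hone : defect Θ f
          = (((∑ j : Fin n, (C j).comp (ContinuousLinearMap.adjoint (C j)))
              ⟨defect Θ f, defect_mem_clRan _ _⟩ : clRan (defect Θ)) : Fock n E) := by
        rw [hQ1]; rfl
      rw [hone, ContinuousLinearMap.sum_apply, Submodule.coe_sum]
      exact Submodule.sum_mem _ fun j _ => hmem j _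
    · exact closure_mono (Set.image_subset_range _ _)
  · -- Szegő ⇒ Cuntz
    intro hcl
    have hd : Dense {x : clRan (defect Θ) |
        (x : Fock n E) ∈ defect Θ '' {f : Fock n E | f [] = 0}} :=
      dense_defect_image (defect Θ) hcl
    refine ContinuousLinearMap.ext_on (hd.mono Submodule.subset_span) ?_
    rintro x ⟨g, hg0, hg⟩
    have hg0' : g [] = 0 := hg0
    have hgsum : ∑ j : Fin n, creation j (coShift j g) = g := sum_creation_coShift hg0'
    have hx2 : x = ∑ j : Fin n, C j ⟨defect Θ (coShift j g), defect_mem_clRan _ _⟩ := by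
      apply Subtype.ext
      rw [Submodule.coe_sum]
      have hcoe : ∀ j : Fin n,
          ((C j ⟨defect Θ (coShift j g), defect_mem_clRan _ _⟩ : clRan (defect Θ))
            : Fock n E) = defect Θ (creation j (coShift j g)) := by
        intro j; rw [hC]
      simp only [hcoe]
      rw [← map_sum, hgsum, hg]
    rw [ContinuousLinearMap.one_apply, hx2, map_sum]
    exact Finset.sum_congr rfl fun k _ => hQC k _

end
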